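/- Let G = (V,E) be a finite connected graph with complex edge weights v : E → ℂ satisfying |1 + v(e)| ≤ 1 for all e. Then |Σ_{E' ⊆ E, (V,E') connected} Π_{e∈E'} v(e)| ≤ Σ_{T ⊆ E, (V,T) a spanning tree} Π_{e∈T} |v(e)|. -/

import Mathlib

open scoped Classical

namespace PenroseAux
open SimpleGraph Finset
variable {V : Type*}


lemma reach_transfer {H H' : SimpleGraph V}
    (h : ∀ a b, H.Adj a b → H'.Reachable a b) {u w : V} (hr : H.Reachable u w) :
    H'.Reachable u w := by
  obtain ⟨p⟩ := hr
  induction p with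
  | nil => exact Reachable.refl _
  | cons ha _ ih => exact (h _ _ ha).trans ih

lemma connected_delete_edge {H : SimpleGraph V} (hH : H.Connected) {x y : V}
    (hr : (H \ fromEdgeSet {s(x, y)}).Reachable x y) :
    (H \ fromEdgeSet {s(x, y)}).Connected := by
  have hne : Nonempty V := hH.nonempty
  rw [connected_iff]
  refine ⟨fun u w => ?_, hne⟩
  refine reach_transfer (fun a b hab => ?_) (hH.preconnected u w)
  by_cases hab' : s(a, b) = s(x, y)
  · rw [Sym2.eq_iff] at hab'
    rcases hab' with ⟨rfl, rfl⟩ | ⟨rfl, rfl⟩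
    · exact hr
    · exact hr.symm
  · exact Adj.reachable (by simp [sdiff_adj, fromEdgeSet_adj, hab, hab', hab.ne])

lemma edgeSet_delete_edge (H : SimpleGraph V) (e : Sym2 V) :
    (H \ fromEdgeSet {e}).edgeSet = H.edgeSet \ {e} := by
  ext f
  simp only [edgeSet_sdiff, edgeSet_fromEdgeSet, Set.mem_diff, Set.mem_singleton_iff,
    Set.mem_setOf_eq, not_and, not_not]
  constructor
  · rintro ⟨hf, h2⟩
    refine ⟨hf, fun hfe => ?_⟩
    exact (H.not_isDiag_of_mem_edgeSet hf) (h2 hfe)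
  · rintro ⟨hf, h2⟩
    exact ⟨hf, fun hfe => absurd hfe h2⟩

lemma exists_spanning_tree [Fintype V] :
    ∀ (n : ℕ) (H : SimpleGraph V), H.edgeSet.ncard = n → H.Connected →
      ∃ T, T ≤ H ∧ T.IsTree := by
  intro n
  induction n using Nat.strong_induction_on with
  | _ n ih =>
    intro H hn hH
    by_cases hac : H.IsAcyclic
    · exact ⟨H, le_rfl, ⟨hH, hac⟩⟩
    · rw [IsAcyclic] at hac
      push_neg at hac
      obtain ⟨u, c, hc⟩ := hac
      have hne : c.edges ≠ [] := by
        intro h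
        have h3 := hc.three_le_length
        have h4 := c.length_edges
        rw [h] at h4
        simp at h4
        omega
      obtain ⟨e, he⟩ := List.exists_mem_of_ne_nil _ hne
      obtain ⟨⟨x, y⟩, rfl⟩ := e.exists_rep
      have hrr := (adj_and_reachable_delete_edges_iff_exists_cycle.mpr ⟨u, c, hc, he⟩).2
      have hmem : s(x, y) ∈ H.edgeSet := c.edges_subset_edgeSet he
      have hH' := connected_delete_edge hH hrr
      have hes := edgeSet_delete_edge H s(x, y)
      have hfin : H.edgeSet.Finite := Set.toFinite _
      have hlt : (H \ fromEdgeSet {s(x, y)}).edgeSet.ncard < n := by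
        rw [hes, ← hn]
        exact Set.ncard_diff_singleton_lt_of_mem hmem hfin
      obtain ⟨T, hle, hT⟩ := ih _ hlt _ rfl hH'
      exact ⟨T, hle.trans sdiff_le, hT⟩

lemma isTree_of_card_le [Fintype V] {H : SimpleGraph V} [Fintype H.edgeSet] (hH : H.Connected)
    (hcard : H.edgeFinset.card + 1 ≤ Fintype.card V) : H.IsTree := by
  obtain ⟨T, hle, hT⟩ := exists_spanning_tree _ H rfl hH
  have h1 : T.edgeFinset ⊆ H.edgeFinset := by
    rw [edgeFinset_subset_edgeFinset]; exact hle
  have h2 := hT.card_edgeFinset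
  have h3 : H.edgeFinset.card ≤ T.edgeFinset.card := by omega
  have h4 : T.edgeFinset = H.edgeFinset := Finset.eq_of_subset_of_card_le h1 h3
  have : T = H := by
    rw [← edgeFinset_inj] at *
    exact h4
  rwa [← this]


section
variable [Fintype V] (G : SimpleGraph V) (ι : Sym2 V → ℕ)



lemma edgeSet_of_subset {A : Finset (Sym2 V)} (hA : A ⊆ G.edgeFinset) :
    (fromEdgeSet (↑A : Set (Sym2 V))).edgeSet = ↑A := by
  rw [edgeSet_fromEdgeSet]
  ext e
  simp only [Set.mem_diff, Set.mem_setOf_eq, Finset.mem_coe, and_iff_left_iff_imp]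
  intro he
  exact G.not_isDiag_of_mem_edgeSet (mem_edgeFinset.mp (hA he))

lemma edgeFinset_of_subset {A : Finset (Sym2 V)}
    [Fintype (fromEdgeSet (↑A : Set (Sym2 V))).edgeSet] (hA : A ⊆ G.edgeFinset) :
    (fromEdgeSet (↑A : Set (Sym2 V))).edgeFinset = A := by
  ext e
  rw [mem_edgeFinset, edgeSet_of_subset G hA, Finset.mem_coe]

/-- Penrose/Kruskal closure of a spanning tree `T`: `T` together with all edges `e` of `G`
whose fundamental path in the tree `T` consists of edges of smaller `ι`-weight. -/
noncomputable def pen (T : Finset (Sym2 V)) : Finset (Sym2 V) :=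
  T ∪ G.edgeFinset.filter (fun e =>
    e ∉ T ∧ ∀ x y, e = s(x, y) → ∀ p : (fromEdgeSet (↑T : Set (Sym2 V))).Walk x y,
      p.IsPath → ∀ f ∈ p.edges, ι f < ι e)

lemma subset_pen (T : Finset (Sym2 V)) : T ⊆ pen G ι T := Finset.subset_union_left

lemma pen_subset {T : Finset (Sym2 V)} (hT : T ⊆ G.edgeFinset) :
    pen G ι T ⊆ G.edgeFinset :=
  Finset.union_subset hT (Finset.filter_subset _ _)

lemma swap_isTree {T : Finset (Sym2 V)} (hTG : T ⊆ G.edgeFinset)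
    (hT : (fromEdgeSet (↑T : Set (Sym2 V))).IsTree) {x y : V} (hxy : s(x, y) ∈ G.edgeFinset)
    (hxyT : s(x, y) ∉ T) {p : (fromEdgeSet (↑T : Set (Sym2 V))).Walk x y} (hp : p.IsPath)
    {f : Sym2 V} (hf : f ∈ p.edges) :
    (fromEdgeSet (↑(insert s(x, y) (T.erase f)) : Set (Sym2 V))).IsTree ∧
      (insert s(x, y) (T.erase f)).card = T.card := by
  revert hf
  induction f using Sym2.ind with
  | _ a b =>
  intro hf
  have hxny : x ≠ y := (G.mem_edgeSet.mp (mem_edgeFinset.mp hxy)).ne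
  have hpT : ∀ e ∈ p.edges, e ∈ (↑T : Set (Sym2 V)) := by
    intro e he
    rw [← edgeSet_of_subset G hTG]
    exact p.edges_subset_edgeSet he
  have hfT : s(a, b) ∈ T := hpT _ hf
  have hfne : s(a, b) ≠ s(x, y) := fun h => hxyT (h ▸ hfT)
  -- the augmented tree T'' = T + xy
  set T'' : Finset (Sym2 V) := insert s(x, y) T with hT''
  have hT''G : T'' ⊆ G.edgeFinset := Finset.insert_subset hxy hTG
  have hle : fromEdgeSet (↑T : Set (Sym2 V)) ≤ fromEdgeSet (↑T'' : Set (Sym2 V)) :=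
    fromEdgeSet_mono (by rw [Finset.coe_insert]; exact Set.subset_insert _ _)
  have hedgesub : ∀ e ∈ p.edges, e ∈ (fromEdgeSet (↑T'' : Set (Sym2 V))).edgeSet := by
    intro e he
    rw [edgeSet_of_subset G hT''G]
    exact Finset.mem_coe.mpr (Finset.mem_insert_of_mem (hpT e he))
  set p'' := p.transfer _ hedgesub with hp''def
  have hp'' : p''.IsPath := hp.transfer _
  have hadj : (fromEdgeSet (↑T'' : Set (Sym2 V))).Adj y x := by
    rw [fromEdgeSet_adj]
    refine ⟨?_, hxny.symm⟩
    rw [Sym2.eq_swap]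
    exact Finset.mem_coe.mpr (Finset.mem_insert_self _ _)
  have hnotmem : s(y, x) ∉ p''.edges := by
    rw [Walk.edges_transfer]
    intro h
    rw [Sym2.eq_swap] at h
    exact hxyT (hpT _ h)
  have hcyc : (Walk.cons hadj p'').IsCycle := Path.cons_isCycle ⟨p'', hp''⟩ hadj hnotmem
  have hfc : s(a, b) ∈ (Walk.cons hadj p'').edges := by
    rw [Walk.edges_cons]
    exact List.mem_cons_of_mem _ (by rw [Walk.edges_transfer]; exact hf)
  have hreach := (adj_and_reachable_delete_edges_iff_exists_cycle.mpr
    ⟨y, Walk.cons hadj p'', hcyc, hfc⟩).2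
  have hconn'' : (fromEdgeSet (↑T'' : Set (Sym2 V))).Connected := hT.isConnected.mono hle
  have hconn3 := connected_delete_edge hconn'' hreach
  have hgeq : fromEdgeSet (↑T'' : Set (Sym2 V)) \ fromEdgeSet {s(a, b)} =
      fromEdgeSet (↑(insert s(x, y) (T.erase s(a, b))) : Set (Sym2 V)) := by
    ext u w
    simp only [sdiff_adj, fromEdgeSet_adj, Finset.coe_insert, Set.mem_insert_iff,
      Finset.mem_coe, Finset.mem_erase, Set.mem_singleton_iff, hT'']
    constructor
    · rintro ⟨⟨h1, h2⟩, h3⟩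
      have h4 : ¬ s(u, w) = s(a, b) := fun hh => h3 ⟨hh, h2⟩
      rcases h1 with h1 | h1
      · exact ⟨Or.inl h1, h2⟩
      · exact ⟨Or.inr ⟨h4, h1⟩, h2⟩
    · rintro ⟨h1, h2⟩
      rcases h1 with h1 | ⟨h1, h1'⟩
      · exact ⟨⟨Or.inl h1, h2⟩, fun hh => hfne (hh.1 ▸ h1 ▸ rfl)⟩
      · exact ⟨⟨Or.inr h1', h2⟩, fun hh => h1 hh.1⟩
  rw [hgeq] at hconn3
  have hxyerase : s(x, y) ∉ T.erase s(a, b) := fun h => hxyT (Finset.mem_of_mem_erase h)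
  have hcard : (insert s(x, y) (T.erase s(a, b))).card = T.card := by
    rw [Finset.card_insert_of_notMem hxyerase, Finset.card_erase_of_mem hfT]
    have : 1 ≤ T.card := Finset.card_pos.mpr ⟨_, hfT⟩
    omega
  refine ⟨isTree_of_card_le hconn3 ?_, hcard⟩
  have hsub : insert s(x, y) (T.erase s(a, b)) ⊆ G.edgeFinset :=
    Finset.insert_subset hxy ((Finset.erase_subset _ _).trans hTG)
  rw [edgeFinset_of_subset G hsub, hcard]
  have := hT.card_edgeFinset
  rw [edgeFinset_of_subset G hTG] at this
  omega


lemma exists_penrose (hι : Function.Injective ι) {A : Finset (Sym2 V)}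
    (hA : A ⊆ G.edgeFinset) (hAc : (fromEdgeSet (↑A : Set (Sym2 V))).Connected) :
    ∃ T : Finset (Sym2 V), (fromEdgeSet (↑T : Set (Sym2 V))).IsTree ∧ T ⊆ A ∧ A ⊆ pen G ι T := by
  obtain ⟨T₀, hT₀le, hT₀⟩ := exists_spanning_tree _ (fromEdgeSet (↑A : Set (Sym2 V))) rfl hAc
  set 𝒮 := A.powerset.filter (fun T : Finset (Sym2 V) => (fromEdgeSet (↑T : Set (Sym2 V))).IsTree) with h𝒮
  have h𝒮ne : 𝒮.Nonempty := by
    refine ⟨T₀.edgeFinset, Finset.mem_filter.mpr ⟨Finset.mem_powerset.mpr ?_, ?_⟩⟩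
    · intro e he
      rw [mem_edgeFinset] at he
      have := edgeSet_mono hT₀le he
      rw [edgeSet_of_subset G hA] at this
      exact this
    · rwa [coe_edgeFinset, fromEdgeSet_edgeSet]
  obtain ⟨T, hT𝒮, hTmin⟩ := Finset.exists_min_image 𝒮 (fun T => ∑ e ∈ T, 2 ^ ι e) h𝒮ne
  rw [h𝒮, Finset.mem_filter, Finset.mem_powerset] at hT𝒮
  obtain ⟨hTA, hTtree⟩ := hT𝒮
  refine ⟨T, hTtree, hTA, ?_⟩
  intro e he
  by_cases heT : e ∈ T
  · exact Finset.mem_union_left _ heT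
  refine Finset.mem_union_right _ (Finset.mem_filter.mpr ⟨hA he, heT, ?_⟩)
  rintro x y rfl p hp f hfp
  by_contra hcon
  push_neg at hcon
  have hfT : f ∈ T := by
    have := p.edges_subset_edgeSet hfp
    rwa [edgeSet_of_subset G (hTA.trans hA), Finset.mem_coe] at this
  have hfe : f ≠ s(x, y) := fun h => heT (h ▸ hfT)
  have hlt : ι s(x, y) < ι f :=
    lt_of_le_of_ne hcon (fun h => hfe (hι h.symm))
  obtain ⟨hT'tree, hT'card⟩ := swap_isTree G (hTA.trans hA) hTtree (hA he) heT hp hfp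
  set T' := insert s(x, y) (T.erase f) with hT'
  have hT'A : T' ⊆ A := Finset.insert_subset he ((Finset.erase_subset _ _).trans hTA)
  have hT'𝒮 : T' ∈ 𝒮 := Finset.mem_filter.mpr ⟨Finset.mem_powerset.mpr hT'A, hT'tree⟩
  have hkey := hTmin T' hT'𝒮
  have hxyerase : s(x, y) ∉ T.erase f := fun h => heT (Finset.mem_of_mem_erase h)
  have hw1 : ∑ e ∈ T', 2 ^ ι e = 2 ^ ι s(x, y) + ∑ e ∈ T.erase f, 2 ^ ι e :=
    Finset.sum_insert hxyerase
  have hw2 : 2 ^ ι f + ∑ e ∈ T.erase f, 2 ^ ι e = ∑ e ∈ T, 2 ^ ι e :=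
    Finset.add_sum_erase _ (fun e => 2 ^ ι e) hfT
  have hpow : (2 : ℕ) ^ ι s(x, y) < 2 ^ ι f := Nat.pow_lt_pow_right (by norm_num) hlt
  omega

lemma penrose_partial (hι : Function.Injective ι) {T₁ T₂ : Finset (Sym2 V)}
    (hT₁G : T₁ ⊆ G.edgeFinset) (hT₂G : T₂ ⊆ G.edgeFinset)
    (h₁ : (fromEdgeSet (↑T₁ : Set (Sym2 V))).IsTree)
    (h₂ : (fromEdgeSet (↑T₂ : Set (Sym2 V))).IsTree)
    {e : Sym2 V} (he₁ : e ∈ T₁) (he₂ : e ∉ T₂) (hepen : e ∈ pen G ι T₂) :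
    ∃ f ∈ T₂, f ∉ T₁ ∧ ι f < ι e := by
  rw [pen, Finset.mem_union, Finset.mem_filter] at hepen
  rcases hepen with h | ⟨_, _, hcond⟩
  · exact absurd h he₂
  revert he₁ he₂ hcond
  induction e using Sym2.ind with
  | _ x y =>
  intro he₁ he₂ hcond
  have hxny : x ≠ y := (G.mem_edgeSet.mp (mem_edgeFinset.mp (hT₁G he₁))).ne
  obtain ⟨w⟩ := h₂.isConnected.preconnected x y
  set q := w.toPath with hq
  have hcond' := hcond x y rfl q.val q.property
  by_contra hno
  push_neg at hno
  have hallT₁ : ∀ f ∈ q.val.edges, f ∈ T₁ := by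
    intro f hf
    have hfT₂ : f ∈ T₂ := by
      have := q.val.edges_subset_edgeSet hf
      rwa [edgeSet_of_subset G hT₂G, Finset.mem_coe] at this
    by_contra hfT₁
    exact absurd (hcond' f hf) (not_lt.mpr (hno f hfT₂ hfT₁))
  have htrans : ∀ f ∈ q.val.edges, f ∈ (fromEdgeSet (↑T₁ : Set (Sym2 V))).edgeSet := by
    intro f hf
    rw [edgeSet_of_subset G hT₁G, Finset.mem_coe]
    exact hallT₁ f hf
  set r := q.val.transfer _ htrans with hr
  have hrpath : r.IsPath := q.property.transfer _
  have hadj : (fromEdgeSet (↑T₁ : Set (Sym2 V))).Adj x y := by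
    rw [fromEdgeSet_adj]
    exact ⟨Finset.mem_coe.mpr he₁, hxny⟩
  have huniq := h₁.IsAcyclic.path_unique ⟨r, hrpath⟩ (Path.singleton hadj)
  have hedges : r.edges = [s(x, y)] := by
    rw [show r = (Path.singleton hadj).val from congrArg Subtype.val huniq]
    rfl
  have : s(x, y) ∈ q.val.edges := by
    have := q.val.edges_transfer htrans
    rw [← hr, hedges] at this
    rw [← this]
    exact List.mem_singleton_self _
  exact lt_irrefl _ (hcond' _ this)

lemma penrose_unique (hι : Function.Injective ι) {A T₁ T₂ : Finset (Sym2 V)}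
    (hT₁G : T₁ ⊆ G.edgeFinset) (hT₂G : T₂ ⊆ G.edgeFinset)
    (h₁ : (fromEdgeSet (↑T₁ : Set (Sym2 V))).IsTree)
    (h₂ : (fromEdgeSet (↑T₂ : Set (Sym2 V))).IsTree)
    (h₁A : T₁ ⊆ A) (hA₁ : A ⊆ pen G ι T₁)
    (h₂A : T₂ ⊆ A) (hA₂ : A ⊆ pen G ι T₂) : T₁ = T₂ := by
  by_contra hne
  set D := (T₁ \ T₂) ∪ (T₂ \ T₁) with hD
  have hDne : D.Nonempty := by
    rw [Finset.nonempty_iff_ne_empty]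
    intro h
    rw [hD, Finset.union_eq_empty, Finset.sdiff_eq_empty_iff_subset,
      Finset.sdiff_eq_empty_iff_subset] at h
    exact hne (Finset.Subset.antisymm h.1 h.2)
  obtain ⟨e, heD, hemin⟩ := Finset.exists_min_image D ι hDne
  rw [hD, Finset.mem_union, Finset.mem_sdiff, Finset.mem_sdiff] at heD
  rcases heD with ⟨he₁, he₂⟩ | ⟨he₂, he₁⟩
  · obtain ⟨f, hf₂, hf₁, hflt⟩ :=
      penrose_partial G ι hι hT₁G hT₂G h₁ h₂ he₁ he₂ (hA₂ (h₁A he₁))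
    have : f ∈ D := Finset.mem_union_right _ (Finset.mem_sdiff.mpr ⟨hf₂, hf₁⟩)
    exact absurd hflt (not_lt.mpr (hemin f this))
  · obtain ⟨f, hf₁, hf₂, hflt⟩ :=
      penrose_partial G ι hι hT₂G hT₁G h₂ h₁ he₂ he₁ (hA₁ (h₂A he₂))
    have : f ∈ D := Finset.mem_union_left _ (Finset.mem_sdiff.mpr ⟨hf₁, hf₂⟩)
    exact absurd hflt (not_lt.mpr (hemin f this))

end
end PenroseAux


open Finset in
theorem stmt_9 {V : Type*} [Fintype V] (G : SimpleGraph V) (hG : G.Connected)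
    (v : Sym2 V → ℂ) (hv : ∀ e ∈ G.edgeSet, ‖1 + v e‖ ≤ 1) :
    ‖(∑ E' ∈ G.edgeFinset.powerset.filter
            (fun E' : Finset (Sym2 V) =>
              (SimpleGraph.fromEdgeSet (↑E' : Set (Sym2 V))).Connected),
          ∏ e ∈ E', v e)‖ ≤
      ∑ T ∈ G.edgeFinset.powerset.filter
          (fun T : Finset (Sym2 V) =>
            (SimpleGraph.fromEdgeSet (↑T : Set (Sym2 V))).IsTree),
        ∏ e ∈ T, ‖v e‖ := by
  set ι : Sym2 V → ℕ := fun e => (Fintype.equivFin (Sym2 V) e : ℕ) with hιdef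
  have hι : Function.Injective ι := fun a b h =>
    (Fintype.equivFin (Sym2 V)).injective (Fin.val_injective h)
  set 𝒞 := G.edgeFinset.powerset.filter
    (fun E' : Finset (Sym2 V) => (SimpleGraph.fromEdgeSet (↑E' : Set (Sym2 V))).Connected)
    with h𝒞
  set 𝒯 := G.edgeFinset.powerset.filter
    (fun T : Finset (Sym2 V) => (SimpleGraph.fromEdgeSet (↑T : Set (Sym2 V))).IsTree)
    with h𝒯
  set σ : Finset (Sym2 V) → Finset (Sym2 V) := fun A =>
    if h : ∃ T : Finset (Sym2 V), (SimpleGraph.fromEdgeSet (↑T : Set (Sym2 V))).IsTree ∧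
        T ⊆ A ∧ A ⊆ PenroseAux.pen G ι T then h.choose else ∅ with hσ
  have hkey : ∀ A ∈ 𝒞, (SimpleGraph.fromEdgeSet (↑(σ A) : Set (Sym2 V))).IsTree ∧
      σ A ⊆ A ∧ A ⊆ PenroseAux.pen G ι (σ A) := by
    intro A hA
    rw [h𝒞, mem_filter, mem_powerset] at hA
    have hex : ∃ T : Finset (Sym2 V), (SimpleGraph.fromEdgeSet (↑T : Set (Sym2 V))).IsTree ∧
        T ⊆ A ∧ A ⊆ PenroseAux.pen G ι T := PenroseAux.exists_penrose G ι hι hA.1 hA.2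
    simp only [hσ, dif_pos hex]
    exact hex.choose_spec
  have hmaps : ∀ A ∈ 𝒞, σ A ∈ 𝒯 := by
    intro A hA
    have h1 := hkey A hA
    rw [h𝒞, mem_filter, mem_powerset] at hA
    rw [h𝒯, mem_filter, mem_powerset]
    exact ⟨(h1.2.1).trans hA.1, h1.1⟩
  rw [← Finset.sum_fiberwise_of_maps_to hmaps]
  have hfiber : ∀ T ∈ 𝒯, (∑ A ∈ 𝒞.filter (fun A => σ A = T), ∏ e ∈ A, v e)
      = (∏ e ∈ T, v e) * ∏ e ∈ PenroseAux.pen G ι T \ T, (1 + v e) := by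
    intro T hT
    rw [h𝒯, mem_filter, mem_powerset] at hT
    obtain ⟨hTG, hTtree⟩ := hT
    have hdisj : ∀ S : Finset (Sym2 V), S ⊆ PenroseAux.pen G ι T \ T → Disjoint T S := by
      intro S hS
      exact (Finset.disjoint_sdiff.mono_right hS)
    have hset : 𝒞.filter (fun A => σ A = T)
        = (PenroseAux.pen G ι T \ T).powerset.image (fun S => T ∪ S) := by
      ext A
      simp only [mem_filter, mem_image, mem_powerset]
      constructor
      · rintro ⟨hA𝒞, hσA⟩
        have h1 := hkey A hA𝒞
        rw [hσA] at h1
        exact ⟨A \ T, Finset.sdiff_subset_sdiff h1.2.2 Finset.Subset.rfl,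
          Finset.union_sdiff_of_subset h1.2.1⟩
      · rintro ⟨S, hS, rfl⟩
        have hS1 : S ⊆ PenroseAux.pen G ι T := hS.trans Finset.sdiff_subset
        have hAG : T ∪ S ⊆ G.edgeFinset :=
          Finset.union_subset hTG (hS1.trans (PenroseAux.pen_subset G ι hTG))
        have hconn : (SimpleGraph.fromEdgeSet (↑(T ∪ S) : Set (Sym2 V))).Connected := by
          refine hTtree.isConnected.mono (SimpleGraph.fromEdgeSet_mono ?_)
          rw [Finset.coe_union]
          exact Set.subset_union_left
        have hA𝒞 : T ∪ S ∈ 𝒞 := by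
          rw [h𝒞, mem_filter, mem_powerset]; exact ⟨hAG, hconn⟩
        refine ⟨hA𝒞, ?_⟩
        have h1 := hkey _ hA𝒞
        exact PenroseAux.penrose_unique G ι hι ((h1.2.1).trans hAG) hTG h1.1 hTtree
          h1.2.1 h1.2.2 Finset.subset_union_left
          (Finset.union_subset (PenroseAux.subset_pen G ι T) hS1)
    rw [hset, Finset.sum_image (by
      intro S hS S' hS' h
      rw [mem_coe, mem_powerset] at hS hS'
      have := congrArg (fun X => X \ T) h
      simpa [Finset.union_sdiff_cancel_left (hdisj S hS),
        Finset.union_sdiff_cancel_left (hdisj S' hS')] using this)]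
    have : ∀ S ∈ (PenroseAux.pen G ι T \ T).powerset,
        (∏ e ∈ T ∪ S, v e) = (∏ e ∈ T, v e) * ∏ e ∈ S, v e := by
      intro S hS
      rw [mem_powerset] at hS
      exact Finset.prod_union (hdisj S hS)
    rw [Finset.sum_congr rfl this, ← Finset.mul_sum]
    congr 1
    have hpa := Finset.prod_add v (fun _ => (1 : ℂ)) (PenroseAux.pen G ι T \ T)
    simp only [Finset.prod_const_one, mul_one] at hpa
    rw [← hpa]
    exact Finset.prod_congr rfl fun e _ => add_comm _ _
  rw [Finset.sum_congr rfl hfiber]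
  calc ‖∑ T ∈ 𝒯, (∏ e ∈ T, v e) * ∏ e ∈ PenroseAux.pen G ι T \ T, (1 + v e)‖
      ≤ ∑ T ∈ 𝒯, ‖(∏ e ∈ T, v e) * ∏ e ∈ PenroseAux.pen G ι T \ T, (1 + v e)‖ :=
        norm_sum_le _ _
    _ ≤ ∑ T ∈ 𝒯, ∏ e ∈ T, ‖v e‖ := by
        refine Finset.sum_le_sum fun T hT => ?_
        rw [h𝒯, mem_filter, mem_powerset] at hT
        rw [norm_mul, norm_prod]
        refine mul_le_of_le_one_right (Finset.prod_nonneg fun e _ => norm_nonneg _) ?_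
        rw [norm_prod]
        refine Finset.prod_le_one (fun e _ => norm_nonneg _) fun e he => ?_
        have : e ∈ G.edgeFinset := PenroseAux.pen_subset G ι hT.1 (Finset.mem_sdiff.mp he).1
        exact hv e (SimpleGraph.mem_edgeFinset.mp this)
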